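/- arXiv:1509.01568 — 2 statements merged into one kernel-verified Lean document; each statement's English description precedes it below -/
import Mathlib

section
/- Rosenblatt–Willis: A discrete group G is amenable if and only if for every finite string 𝔤 of elements of G and every finite partition ℰ of G, the system of configuration equations Eq(𝔤,ℰ) has a normalized solution, i.e., a solution (f_C)_{C ∈ Con(𝔤,ℰ)} with f_C ≥ 0 for all C and ∑_{C ∈ Con(𝔤,ℰ)} f_C = 1. -/
open Pointwise

namespace PaperStmt

/-- A group admits a paradoxical decomposition: there are pairwise disjoint subsets
`A 1, …, A p, B 1, …, B q` and group elements `s i`, `t j` such that the translates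
`s i • A i` partition `G` and the translates `t j • B j` partition `G`. -/
def IsParadoxical (G : Type*) [Group G] : Prop :=
  ∃ (p q : ℕ), 0 < p ∧ 0 < q ∧
    ∃ (A : Fin p → Set G) (B : Fin q → Set G) (s : Fin p → G) (t : Fin q → G),
      (∀ i i', i ≠ i' → Disjoint (A i) (A i')) ∧
      (∀ j j', j ≠ j' → Disjoint (B j) (B j')) ∧
      (∀ i j, Disjoint (A i) (B j)) ∧
      (⋃ i, s i • A i) = Set.univ ∧
      (∀ i i', i ≠ i' → Disjoint (s i • A i) (s i' • A i')) ∧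
      (⋃ j, t j • B j) = Set.univ ∧
      (∀ j j', j ≠ j' → Disjoint (t j • B j) (t j' • B j'))

/-- A finitely additive, left-invariant probability measure defined on all subsets of `G`
(the defining property of amenability for a discrete group). -/
def HasLeftInvariantMean (G : Type*) [Group G] : Prop :=
  ∃ μ : Set G → ℝ,
    (∀ A : Set G, 0 ≤ μ A ∧ μ A ≤ 1) ∧
    μ Set.univ = 1 ∧
    (∀ A B : Set G, Disjoint A B → μ (A ∪ B) = μ A + μ B) ∧
    (∀ (g : G) (A : Set G), μ (g • A) = μ A)

/-- A *complete* paradoxical decomposition with `p + q` pieces: the pieces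
`A 1, …, A p, B 1, …, B q` form a partition of `G`, and the translates
`s i • A i` and `t j • B j` each form a partition of `G`. -/
def IsCompleteParadox (G : Type*) [Group G] (p q : ℕ) : Prop :=
  ∃ (A : Fin p → Set G) (B : Fin q → Set G) (s : Fin p → G) (t : Fin q → G),
    (∀ i i', i ≠ i' → Disjoint (A i) (A i')) ∧
    (∀ j j', j ≠ j' → Disjoint (B j) (B j')) ∧
    (∀ i j, Disjoint (A i) (B j)) ∧
    ((⋃ i, A i) ∪ (⋃ j, B j)) = Set.univ ∧
    (⋃ i, s i • A i) = Set.univ ∧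
    (∀ i i', i ≠ i' → Disjoint (s i • A i) (s i' • A i')) ∧
    (⋃ j, t j • B j) = Set.univ ∧
    (∀ j j', j ≠ j' → Disjoint (t j • B j) (t j' • B j'))

/-- The Tarski number of a group: the least total number of pieces `p + q` over all
complete paradoxical decompositions of `G`, and `∞` if there is none. -/
noncomputable def tarskiNumber (G : Type*) [Group G] : ℕ∞ :=
  sInf {N : ℕ∞ | ∃ p q : ℕ, N = ((p + q : ℕ) : ℕ∞) ∧ IsCompleteParadox G p q}

end PaperStmt

open Pointwise

namespace PaperStmt

/-- `E : Fin m → Set G` is a partition of `G`: pairwise disjoint with union all of `G`. -/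
def IsPartition {G : Type*} {m : ℕ} (E : Fin m → Set G) : Prop :=
  (∀ i j, i ≠ j → Disjoint (E i) (E j)) ∧ (⋃ i, E i) = Set.univ

/-- `C = (c_0, …, c_n)` is a configuration for the pair `(g, E)`: there is `x ∈ E (c 0)`
with `g i * x ∈ E (c i)` for `1 ≤ i ≤ n`. -/
def IsConfig {G : Type*} [Group G] {n m : ℕ} (g : Fin n → G) (E : Fin m → Set G)
    (C : Fin (n + 1) → Fin m) : Prop :=
  ∃ x : G, x ∈ E (C 0) ∧ ∀ i : Fin n, g i * x ∈ E (C i.succ)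

/-- `x_0(C) = E_{c_0} ∩ ⋂_{j=1}^n g_j⁻¹ E_{c_j}`. -/
def xzero {G : Type*} [Group G] {n m : ℕ} (g : Fin n → G) (E : Fin m → Set G)
    (C : Fin (n + 1) → Fin m) : Set G :=
  E (C 0) ∩ ⋂ i : Fin n, (g i)⁻¹ • E (C i.succ)

/-- The string `(g_0, g_1, …, g_n)` with `g_0 = e`. -/
def ghat {G : Type*} [Group G] {n : ℕ} (g : Fin n → G) : Fin (n + 1) → G := Fin.cons 1 g

/-- `x_j(C) = g_j • x_0(C)` for `0 ≤ j ≤ n` (with `g_0 = e`). -/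
def xj {G : Type*} [Group G] {n m : ℕ} (g : Fin n → G) (E : Fin m → Set G)
    (C : Fin (n + 1) → Fin m) (j : Fin (n + 1)) : Set G :=
  ghat g j • xzero g E C

/-- The real-valued indicator of a proposition. -/
noncomputable def ind (P : Prop) : ℝ :=
  letI := Classical.propDecidable P; if P then 1 else 0

/-- `f` is a solution of the system of configuration equations `Eq(g, E)`:
for all `1 ≤ i ≤ m` and `0 ≤ j, k ≤ n`,
`∑_{C : x_j(C) ⊆ E_i} f C = ∑_{C : x_k(C) ⊆ E_i} f C`. -/
def IsEqSolution {G : Type*} [Group G] {n m : ℕ} (g : Fin n → G) (E : Fin m → Set G)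
    (f : {C : Fin (n + 1) → Fin m // IsConfig g E C} → ℝ) : Prop :=
  ∀ (i : Fin m) (j k : Fin (n + 1)),
    ∑ᶠ C ∈ {C : {C : Fin (n + 1) → Fin m // IsConfig g E C} | xj g E C.1 j ⊆ E i}, f C =
    ∑ᶠ C ∈ {C : {C : Fin (n + 1) → Fin m // IsConfig g E C} | xj g E C.1 k ⊆ E i}, f C

end PaperStmt

namespace PaperStmt

section Lemmas

variable {G : Type*} [Group G] {n m : ℕ} (g : Fin n → G) (E : Fin m → Set G)

lemma mem_xzero_iff {C : Fin (n+1) → Fin m} {x : G} :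
    x ∈ xzero g E C ↔ ∀ k : Fin (n+1), ghat g k * x ∈ E (C k) := by
  rw [Fin.forall_fin_succ]
  simp only [xzero, Set.mem_inter_iff, Set.mem_iInter, ghat, Fin.cons_zero, Fin.cons_succ,
    one_mul, Set.mem_smul_set_iff_inv_smul_mem, inv_inv, smul_eq_mul]

lemma isConfig_iff_nonempty {C : Fin (n+1) → Fin m} :
    IsConfig g E C ↔ (xzero g E C).Nonempty := by
  constructor
  · rintro ⟨x, hx0, hxs⟩
    refine ⟨x, (mem_xzero_iff g E).2 ?_⟩
    rw [Fin.forall_fin_succ]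
    simpa [ghat] using ⟨hx0, hxs⟩
  · rintro ⟨x, hx⟩
    rw [mem_xzero_iff] at hx
    refine ⟨x, ?_, fun i => ?_⟩
    · simpa [ghat] using hx 0
    · simpa [ghat] using hx i.succ

lemma xj_subset (C : Fin (n+1) → Fin m) (j : Fin (n+1)) :
    xj g E C j ⊆ E (C j) := by
  rintro y ⟨x, hx, rfl⟩
  have := (mem_xzero_iff g E).1 hx j
  simpa [smul_eq_mul] using this

lemma xj_nonempty {C : Fin (n+1) → Fin m} (hC : IsConfig g E C) (j : Fin (n+1)) :
    (xj g E C j).Nonempty := by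
  obtain ⟨x, hx⟩ := (isConfig_iff_nonempty g E).1 hC
  exact ⟨ghat g j • x, ⟨x, hx, rfl⟩⟩

lemma subset_unique (hE : IsPartition E) {s : Set G} (hs : s.Nonempty) {i i' : Fin m}
    (h1 : s ⊆ E i) (h2 : s ⊆ E i') : i = i' := by
  by_contra hne
  obtain ⟨x, hx⟩ := hs
  exact (hE.1 i i' hne).le_bot ⟨h1 hx, h2 hx⟩ 

lemma xj_subset_iff (hE : IsPartition E) {C : Fin (n+1) → Fin m} (hC : IsConfig g E C)
    {j : Fin (n+1)} {i : Fin m} : xj g E C j ⊆ E i ↔ C j = i := by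
  constructor
  · intro h
    exact subset_unique E hE (xj_nonempty g E hC j) (xj_subset g E C j) h
  · rintro rfl
    exact xj_subset g E C j

/-- the configuration of a point -/
noncomputable def cfg (hE : IsPartition E) (x : G) : Fin (n+1) → Fin m := fun k =>
  Classical.choose (show ∃ i, ghat g k * x ∈ E i by
    have : ghat g k * x ∈ ⋃ i, E i := hE.2 ▸ Set.mem_univ _
    exact Set.mem_iUnion.1 this)

lemma mem_xzero_cfg (hE : IsPartition E) (x : G) : x ∈ xzero g E (cfg g E hE x) := by
  rw [mem_xzero_iff]
  intro k
  exact Classical.choose_spec (show ∃ i, ghat g k * x ∈ E i by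
    have : ghat g k * x ∈ ⋃ i, E i := hE.2 ▸ Set.mem_univ _
    exact Set.mem_iUnion.1 this)

lemma eq_cfg (hE : IsPartition E) {x : G} {C : Fin (n+1) → Fin m}
    (hx : x ∈ xzero g E C) : C = cfg g E hE x := by
  funext k
  have h1 := (mem_xzero_iff g E).1 hx k
  have h2 := (mem_xzero_iff g E).1 (mem_xzero_cfg g E hE x) k
  by_contra hne
  exact (hE.1 _ _ hne).le_bot ⟨h1, h2⟩

lemma xzero_disjoint (hE : IsPartition E) {C C' : Fin (n+1) → Fin m} (h : C ≠ C') :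
    Disjoint (xzero g E C) (xzero g E C') := by
  rw [Set.disjoint_left]
  intro x hx hx'
  exact h ((eq_cfg g E hE hx).trans (eq_cfg g E hE hx').symm)

end Lemmas

section Mean

variable {G : Type*} [Group G]

lemma mean_empty {μ : Set G → ℝ}
    (hadd : ∀ A B : Set G, Disjoint A B → μ (A ∪ B) = μ A + μ B) : μ ∅ = 0 := by
  have h := hadd ∅ ∅ (by simp)
  simp at h
  linarith

lemma mean_finset_sum {μ : Set G → ℝ}
    (hadd : ∀ A B : Set G, Disjoint A B → μ (A ∪ B) = μ A + μ B)
    {κ : Type*} [DecidableEq κ] (t : Finset κ) (A : κ → Set G)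
    (hdisj : ∀ i ∈ t, ∀ j ∈ t, i ≠ j → Disjoint (A i) (A j)) :
    μ (⋃ i ∈ t, A i) = ∑ i ∈ t, μ (A i) := by
  induction t using Finset.induction_on with
  | empty => simpa using mean_empty hadd
  | @insert a s ha ih =>
    rw [Finset.set_biUnion_insert, Finset.sum_insert ha,
      hadd _ _ ?_, ih ?_]
    · intro i hi j hj hij
      exact hdisj i (Finset.mem_insert_of_mem hi) j (Finset.mem_insert_of_mem hj) hij
    · rw [Set.disjoint_iUnion_right]
      intro i
      rw [Set.disjoint_iUnion_right]
      intro hi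
      exact hdisj a (Finset.mem_insert_self a s) i (Finset.mem_insert_of_mem hi)
        (fun h => ha (h ▸ hi))

lemma forward_dir (hG : HasLeftInvariantMean G) :
    ∀ (n m : ℕ) (g : Fin n → G) (E : Fin m → Set G), IsPartition E →
      ∃ f : {C : Fin (n + 1) → Fin m // IsConfig g E C} → ℝ,
        (∀ C, 0 ≤ f C) ∧ (∑ᶠ C, f C) = 1 ∧ IsEqSolution g E f := by
  classical
  obtain ⟨μ, h01, huniv, hadd, hinv⟩ := hG
  intro n m g E hE
  haveI : Fintype {C : Fin (n + 1) → Fin m // IsConfig g E C} := Fintype.ofFinite _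
  set Cfg := {C : Fin (n + 1) → Fin m // IsConfig g E C}
  refine ⟨fun C => μ (xzero g E C.1), fun C => (h01 _).1, ?_, ?_⟩
  · rw [finsum_eq_sum_of_fintype]
    have hU : (⋃ C ∈ (Finset.univ : Finset Cfg), xzero g E C.1) = Set.univ := by
      ext x
      simp only [Set.mem_iUnion, Set.mem_univ, iff_true, Finset.mem_univ, exists_true_left]
      exact ⟨⟨cfg g E hE x, (isConfig_iff_nonempty g E).2 ⟨x, mem_xzero_cfg g E hE x⟩⟩,
        mem_xzero_cfg g E hE x⟩
    rw [← huniv, ← hU, mean_finset_sum hadd]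
    intro C _ C' _ hne
    exact xzero_disjoint g E hE (fun h => hne (Subtype.ext h))
  · intro i j k
    have key : ∀ j : Fin (n+1),
        ∑ᶠ C ∈ {C : Cfg | xj g E C.1 j ⊆ E i}, μ (xzero g E C.1) = μ (E i) := by
      intro j
      have hset : {C : Cfg | xj g E C.1 j ⊆ E i}
          = ↑(Finset.univ.filter (fun C : Cfg => C.1 j = i)) := by
        ext C
        simp [xj_subset_iff g E hE C.2]
      rw [hset, finsum_mem_coe_finset]
      have hdisj : ∀ C ∈ Finset.univ.filter (fun C : Cfg => C.1 j = i),
          ∀ C' ∈ Finset.univ.filter (fun C : Cfg => C.1 j = i), C ≠ C' →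
          Disjoint (xzero g E C.1) (xzero g E C'.1) := by
        intro C _ C' _ hne
        exact xzero_disjoint g E hE (fun h => hne (Subtype.ext h))
      rw [← mean_finset_sum hadd _ _ hdisj]
      have hU : (⋃ C ∈ Finset.univ.filter (fun C : Cfg => C.1 j = i), xzero g E C.1)
          = (ghat g j)⁻¹ • E i := by
        ext x
        simp only [Set.mem_iUnion, Finset.mem_filter, Finset.mem_univ, true_and,
          Set.mem_smul_set_iff_inv_smul_mem, inv_inv, smul_eq_mul]
        constructor
        · rintro ⟨C, hCj, hx⟩
          exact hCj ▸ (mem_xzero_iff g E).1 hx j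
        · intro hx
          refine ⟨⟨cfg g E hE x,
            (isConfig_iff_nonempty g E).2 ⟨x, mem_xzero_cfg g E hE x⟩⟩, ?_,
            mem_xzero_cfg g E hE x⟩
          have h2 := (mem_xzero_iff g E).1 (mem_xzero_cfg g E hE x) j
          by_contra hne
          exact (hE.1 _ _ hne).le_bot ⟨h2, hx⟩
      rw [hU]
      have h3 := hinv (ghat g j) ((ghat g j)⁻¹ • E i)
      rw [smul_inv_smul] at h3
      exact h3.symm
    rw [key j, key k]

end Mean

section Atoms

open scoped Classical

variable {G : Type*}

def atomOf (S : Finset (Set G)) (b : {A : Set G // A ∈ S} → Bool) : Set G :=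
  {x | ∀ A : {A : Set G // A ∈ S}, x ∈ (A : Set G) ↔ b A}

lemma atom_mem_congr {S : Finset (Set G)} {b : {A : Set G // A ∈ S} → Bool} {x y : G}
    (hx : x ∈ atomOf S b) (hy : y ∈ atomOf S b) {A : Set G} (hA : A ∈ S) :
    x ∈ A ↔ y ∈ A := (hx ⟨A, hA⟩).trans (hy ⟨A, hA⟩).symm

noncomputable def atomE (S : Finset (Set G)) :
    Fin (Fintype.card ({A : Set G // A ∈ S} → Bool)) → Set G :=
  fun i => atomOf S ((Fintype.equivFin _).symm i)

lemma atomE_subset_iff {S : Finset (Set G)} {A : Set G} (hA : A ∈ S) {i} {y : G}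
    (hy : y ∈ atomE S i) : atomE S i ⊆ A ↔ y ∈ A :=
  ⟨fun h => h hy, fun h z hz => (atom_mem_congr hz hy hA).2 h⟩

lemma atomE_isPartition (S : Finset (Set G)) : IsPartition (atomE S) := by
  constructor
  · intro i j hij
    rw [Set.disjoint_left]
    intro x hx hx'
    have hb : (Fintype.equivFin ({A : Set G // A ∈ S} → Bool)).symm i ≠
        (Fintype.equivFin _).symm j := fun h => hij (by simpa using congrArg (Fintype.equivFin _) h)
    obtain ⟨A, hAne⟩ := Function.ne_iff.1 hb
    have h1 := hx A
    have h2 := hx' A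
    apply hAne
    rw [← Bool.coe_iff_coe]
    exact h1.symm.trans h2
  · ext x
    simp only [Set.mem_iUnion, Set.mem_univ, iff_true]
    refine ⟨Fintype.equivFin _ (fun A => decide (x ∈ (A : Set G))), ?_⟩
    show x ∈ atomOf S _
    rw [Equiv.symm_apply_apply]
    intro A
    exact decide_eq_true_iff.symm

end Atoms

section Helpers

lemma finsum_mem_eq_sum_indicator {β : Type*} [Fintype β] (f : β → ℝ) (s : Set β) :
    ∑ᶠ C ∈ s, f C = ∑ C : β, s.indicator f C := by
  rw [finsum_mem_def, finsum_eq_sum_of_fintype]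

lemma sum_indicator_comp {β : Type*} [Fintype β] {γ : Type*} [Fintype γ]
    (f : β → ℝ) (φ : β → γ) (Q : Set γ) :
    ∑ C : β, ({C | φ C ∈ Q} : Set β).indicator f C
      = ∑ i : γ, Q.indicator (fun i => ∑ C : β, ({C | φ C = i} : Set β).indicator f C) i := by
  classical
  simp only [Set.indicator_apply, Set.mem_setOf_eq]
  have h1 : ∀ i : γ, (if i ∈ Q then (∑ C : β, if φ C = i then f C else 0) else 0)
      = ∑ C : β, if φ C = i then (if i ∈ Q then f C else 0) else 0 := by
    intro i
    split_ifs with h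
    · exact Finset.sum_congr rfl fun C _ => by by_cases hc : φ C = i <;> simp [hc, h]
    · simp [h]
  rw [Finset.sum_congr rfl fun i _ => h1 i, Finset.sum_comm]
  refine Finset.sum_congr rfl fun C _ => ?_
  have h2 : ∀ i : γ, (if φ C = i then (if i ∈ Q then f C else 0) else 0)
      = if φ C = i then (if φ C ∈ Q then f C else 0) else 0 := by
    intro i
    by_cases hc : φ C = i
    · subst hc; rfl
    · simp [hc]
  rw [Finset.sum_congr rfl fun i _ => h2 i, Finset.sum_ite_eq Finset.univ (φ C)]
  simp

end Helpers

section GoodMeasure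

variable {G : Type*} [Group G]

lemma exists_good_measure
    (H : ∀ (n m : ℕ) (g : Fin n → G) (E : Fin m → Set G), IsPartition E →
      ∃ f : {C : Fin (n + 1) → Fin m // IsConfig g E C} → ℝ,
        (∀ C, 0 ≤ f C) ∧ (∑ᶠ C, f C) = 1 ∧ IsEqSolution g E f)
    (F : Finset G) (S : Finset (Set G)) :
    ∃ ν : Set G → ℝ,
      (∀ A, 0 ≤ ν A ∧ ν A ≤ 1) ∧ ν Set.univ = 1 ∧
      (∀ A B : Set G, A ∈ S → B ∈ S → (A ∪ B) ∈ S → Disjoint A B →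
        ν (A ∪ B) = ν A + ν B) ∧
      (∀ (g₀ : G) (A : Set G), g₀ ∈ F → A ∈ S → (g₀ • A) ∈ S → ν (g₀ • A) = ν A) := by
  classical
  have hE : IsPartition (atomE S) := atomE_isPartition S
  set n := F.card with hn
  set g : Fin n → G := fun i => ((F.equivFin.symm i : F) : G) with hgdef
  haveI : Fintype {C // IsConfig g (atomE S) C} := Fintype.ofFinite _
  obtain ⟨f, hf0, hf1, hfeq⟩ := H n _ g (atomE S) hE
  have hwit : ∀ C : {C // IsConfig g (atomE S) C}, (xzero g (atomE S) C.1).Nonempty :=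
    fun C => (isConfig_iff_nonempty g (atomE S)).1 C.2
  set w : {C // IsConfig g (atomE S) C} → G := fun C => (hwit C).choose with hw
  have hwmem : ∀ (C : {C // IsConfig g (atomE S) C}) (k : Fin (n+1)),
      ghat g k * w C ∈ atomE S (C.1 k) :=
    fun C k => (mem_xzero_iff g (atomE S)).1 (hwit C).choose_spec k
  have hw0 : ∀ C : {C // IsConfig g (atomE S) C}, w C ∈ atomE S (C.1 0) := fun C => by
    have := hwmem C 0
    simpa [ghat] using this
  have htot : ∑ C : {C // IsConfig g (atomE S) C}, f C = 1 := by
    rw [← finsum_eq_sum_of_fintype]; exact hf1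
  have hsub : ∀ {C : {C // IsConfig g (atomE S) C}} {A : Set G}, A ∈ S →
      (atomE S (C.1 0) ⊆ A ↔ w C ∈ A) :=
    fun {C A} hA => atomE_subset_iff hA (hw0 C)
  set ν : Set G → ℝ := fun A =>
    ∑ C : {C // IsConfig g (atomE S) C},
      ({C : {C // IsConfig g (atomE S) C} | atomE S (C.1 0) ⊆ A}).indicator f C with hν
  have hterm : ∀ (A : Set G) (C : {C // IsConfig g (atomE S) C}),
      ({C : {C // IsConfig g (atomE S) C} | atomE S (C.1 0) ⊆ A}).indicator f C
        = if atomE S (C.1 0) ⊆ A then f C else 0 := fun A C => Set.indicator_apply _ _ _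
  refine ⟨ν, ?_, ?_, ?_, ?_⟩
  · intro A
    constructor
    · refine Finset.sum_nonneg fun C _ => ?_
      rw [hterm]
      split_ifs
      exacts [hf0 C, le_refl 0]
    · calc ν A ≤ ∑ C : {C // IsConfig g (atomE S) C}, f C := by
            refine Finset.sum_le_sum fun C _ => ?_
            rw [hterm]
            split_ifs
            exacts [le_refl _, hf0 C]
        _ = 1 := htot
  · show (∑ C : {C // IsConfig g (atomE S) C}, _) = 1
    rw [Finset.sum_congr rfl fun C _ =>
      Set.indicator_of_mem (show C ∈ {C : {C // IsConfig g (atomE S) C} |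
        atomE S (C.1 0) ⊆ Set.univ} from Set.subset_univ _) f]
    exact htot
  · intro A B hA hB hAB hd
    show (∑ C : {C // IsConfig g (atomE S) C}, _)
        = (∑ C : {C // IsConfig g (atomE S) C}, _) + ∑ C : {C // IsConfig g (atomE S) C}, _
    rw [← Finset.sum_add_distrib]
    refine Finset.sum_congr rfl fun C _ => ?_
    rw [hterm, hterm, hterm, if_congr (hsub hAB) rfl rfl, if_congr (hsub hA) rfl rfl,
      if_congr (hsub hB) rfl rfl]
    by_cases ha : w C ∈ A <;> by_cases hb : w C ∈ B
    · exact absurd hb (Set.disjoint_left.1 hd ha)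
    · simp [Set.mem_union, ha, hb]
    · simp [Set.mem_union, ha, hb]
    · simp [Set.mem_union, ha, hb]
  · intro g₀ A hgF hA hgA
    obtain ⟨k, hk⟩ : ∃ k : Fin n, g k = g₀ := ⟨F.equivFin ⟨g₀, hgF⟩, by simp [hgdef]⟩
    have hgj : ghat g k.succ = g₀ := by simpa [ghat] using hk
    set T : Fin (n+1) → Fin (Fintype.card ({A : Set G // A ∈ S} → Bool)) → ℝ := fun l i =>
      ∑ C : {C // IsConfig g (atomE S) C},
        ({C : {C // IsConfig g (atomE S) C} | C.1 l = i}).indicator f C with hT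
    have claimB : ∀ i, T 0 i = T k.succ i := by
      intro i
      have h1 := hfeq i (0 : Fin (n+1)) k.succ
      have hsets : ∀ l : Fin (n+1),
          {C : {C // IsConfig g (atomE S) C} | xj g (atomE S) C.1 l ⊆ atomE S i}
            = {C : {C // IsConfig g (atomE S) C} | C.1 l = i} := by
        intro l
        ext C
        simp only [Set.mem_setOf_eq]
        exact xj_subset_iff g (atomE S) hE C.2
      rw [hsets 0, hsets k.succ, finsum_mem_eq_sum_indicator, finsum_mem_eq_sum_indicator] at h1
      exact h1
    set Q : Set (Fin (Fintype.card ({A : Set G // A ∈ S} → Bool))) :=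
      {i | atomE S i ⊆ g₀ • A} with hQ
    calc ν (g₀ • A)
        = ∑ i, Q.indicator (fun i => T 0 i) i :=
          sum_indicator_comp f (fun C => C.1 0) Q
      _ = ∑ i, Q.indicator (fun i => T k.succ i) i := by
          rw [Set.indicator_congr fun a _ => claimB a]
      _ = ∑ C : {C // IsConfig g (atomE S) C},
            ({C : {C // IsConfig g (atomE S) C} | C.1 k.succ ∈ Q}).indicator f C :=
          (sum_indicator_comp f (fun C => C.1 k.succ) Q).symm
      _ = ν A := by
          refine Finset.sum_congr rfl fun C _ => ?_
          have hm : g₀ * w C ∈ atomE S (C.1 k.succ) := by rw [← hgj]; exact hwmem C k.succ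
          have h2 : atomE S (C.1 k.succ) ⊆ g₀ • A ↔ w C ∈ A := by
            rw [atomE_subset_iff hgA hm, show g₀ * w C = g₀ • w C from rfl,
              Set.smul_mem_smul_set_iff]
          rw [hterm]
          rw [show (({C : {C // IsConfig g (atomE S) C} | C.1 k.succ ∈ Q}).indicator f C : ℝ)
            = if atomE S (C.1 k.succ) ⊆ g₀ • A then f C else 0 from Set.indicator_apply _ _ _]
          rw [if_congr h2 rfl rfl, if_congr (hsub hA) rfl rfl]

end GoodMeasure

section Backward

open Filter Topology

variable {G : Type*} [Group G]

lemma backward_dir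
    (H : ∀ (n m : ℕ) (g : Fin n → G) (E : Fin m → Set G), IsPartition E →
      ∃ f : {C : Fin (n + 1) → Fin m // IsConfig g E C} → ℝ,
        (∀ C, 0 ≤ f C) ∧ (∑ᶠ C, f C) = 1 ∧ IsEqSolution g E f) :
    HasLeftInvariantMean G := by
  classical
  have key := fun (α : Finset G × Finset (Set G)) => exists_good_measure H α.1 α.2
  choose Φ hb hu hadd hinv using key
  haveI : Nonempty (Finset G × Finset (Set G)) := ⟨(∅, ∅)⟩
  haveI : (Filter.atTop (α := Finset G × Finset (Set G))).NeBot := Filter.atTop_neBot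
  set U := Ultrafilter.of (Filter.atTop (α := Finset G × Finset (Set G))) with hU
  have hUle : (U : Filter (Finset G × Finset (Set G))) ≤ Filter.atTop :=
    Ultrafilter.of_le _
  have hlim : ∀ A : Set G, ∃ r ∈ Set.Icc (0:ℝ) 1,
      Filter.Tendsto (fun α => Φ α A) U (𝓝 r) := by
    intro A
    have hmem : Set.Icc (0:ℝ) 1 ∈ (U.map (fun α => Φ α A) : Filter ℝ) := by
      refine Filter.mem_map.2 (Filter.univ_mem' ?_)
      intro α
      exact ⟨(hb α A).1, (hb α A).2⟩
    obtain ⟨r, hr, hle⟩ := isCompact_Icc.ultrafilter_le_nhds (U.map (fun α => Φ α A))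
      (Filter.le_principal_iff.2 hmem)
    exact ⟨r, hr, hle⟩
  choose μ hμIcc hμt using hlim
  refine ⟨μ, fun A => ⟨(hμIcc A).1, (hμIcc A).2⟩, ?_, ?_, ?_⟩
  · have h1 : Filter.Tendsto (fun α => Φ α Set.univ) U (𝓝 1) := by
      have he : (fun α => Φ α Set.univ) = fun _ => (1:ℝ) := funext fun α => hu α
      rw [he]
      exact tendsto_const_nhds
    exact tendsto_nhds_unique (hμt Set.univ) h1
  · intro A B hd
    have hev : ∀ᶠ α in (U : Filter (Finset G × Finset (Set G))),
        Φ α A + Φ α B = Φ α (A ∪ B) := by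
      have hsec : {β : Finset G × Finset (Set G) |
          ((∅ : Finset G), ({A, B, A ∪ B} : Finset (Set G))) ≤ β} ∈
          (U : Filter (Finset G × Finset (Set G))) :=
        hUle (Filter.mem_atTop _)
      refine Filter.mem_of_superset hsec ?_
      rintro β hβ
      have h2 : ({A, B, A ∪ B} : Finset (Set G)) ⊆ β.2 := hβ.2
      exact (hadd β A B (h2 (by simp)) (h2 (by simp)) (h2 (by simp)) hd).symm
    exact tendsto_nhds_unique (hμt (A ∪ B))
      (Filter.Tendsto.congr' hev ((hμt A).add (hμt B)))
  · intro g₀ A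
    have hev : ∀ᶠ α in (U : Filter (Finset G × Finset (Set G))),
        Φ α A = Φ α (g₀ • A) := by
      have hsec : {β : Finset G × Finset (Set G) |
          (({g₀} : Finset G), ({A, g₀ • A} : Finset (Set G))) ≤ β} ∈
          (U : Filter (Finset G × Finset (Set G))) :=
        hUle (Filter.mem_atTop _)
      refine Filter.mem_of_superset hsec ?_
      rintro β hβ
      have h1 : ({g₀} : Finset G) ⊆ β.1 := hβ.1
      have h2 : ({A, g₀ • A} : Finset (Set G)) ⊆ β.2 := hβ.2
      exact (hinv β g₀ A (h1 (by simp)) (h2 (by simp)) (h2 (by simp))).symm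
    exact (tendsto_nhds_unique (Filter.Tendsto.congr' hev (hμt A)) (hμt (g₀ • A))).symm

end Backward

/-- **Rosenblatt–Willis.** A discrete group `G` is amenable if and only if for every finite
string `g` of elements of `G` and every finite partition `E` of `G`, the system of
configuration equations `Eq(g, E)` has a normalized solution: a nonnegative solution
`(f_C)_{C ∈ Con(g, E)}` with `∑_C f_C = 1`. -/
theorem rosenblatt_willis (G : Type*) [Group G] :
    HasLeftInvariantMean G ↔
      ∀ (n m : ℕ) (g : Fin n → G) (E : Fin m → Set G), IsPartition E →
        ∃ f : {C : Fin (n + 1) → Fin m // IsConfig g E C} → ℝ,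
          (∀ C, 0 ≤ f C) ∧ (∑ᶠ C, f C) = 1 ∧ IsEqSolution g E f := by
  exact ⟨forward_dir, backward_dir⟩

end PaperStmt
end

section
/- Tarski's alternative: For every discrete group G, exactly one of the following holds: (1) G admits a paradoxical decomposition; (2) G is amenable. -/
open Pointwise

namespace PaperStmt

set_option linter.unusedSectionVars false
set_option maxHeartbeats 1000000

section Aux
open Filter
variable {G : Type*} [Group G]

lemma mean_biUnion {μ : Set G → ℝ}
    (hadd : ∀ A B : Set G, Disjoint A B → μ (A ∪ B) = μ A + μ B)
    {ι : Type*} [DecidableEq ι] (s : Finset ι) (A : ι → Set G)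
    (hdisj : ∀ i ∈ s, ∀ j ∈ s, i ≠ j → Disjoint (A i) (A j)) :
    μ (⋃ i ∈ s, A i) = ∑ i ∈ s, μ (A i) := by
  have h0 : μ ∅ = 0 := by
    have := hadd ∅ ∅ disjoint_bot_left
    simp at this
    linarith
  induction s using Finset.induction_on with
  | empty => simp [h0]
  | @insert a s ha ih =>
    have hd : Disjoint (A a) (⋃ i ∈ s, A i) := by
      apply Set.disjoint_iUnion₂_right.2
      intro j hj
      exact hdisj a (Finset.mem_insert_self a s) j (Finset.mem_insert_of_mem hj)
        (by rintro rfl; exact ha hj)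
    have : (⋃ i ∈ insert a s, A i) = A a ∪ ⋃ i ∈ s, A i := by
      simp [Set.biUnion_insert]
    rw [this, hadd _ _ hd, Finset.sum_insert ha,
      ih fun i hi j hj hij => hdisj i (Finset.mem_insert_of_mem hi) j (Finset.mem_insert_of_mem hj) hij]

lemma mean_iUnion_fin {μ : Set G → ℝ}
    (hadd : ∀ A B : Set G, Disjoint A B → μ (A ∪ B) = μ A + μ B)
    {n : ℕ} (A : Fin n → Set G)
    (hdisj : ∀ i j, i ≠ j → Disjoint (A i) (A j)) :
    μ (⋃ i, A i) = ∑ i, μ (A i) := by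
  have := mean_biUnion hadd (Finset.univ : Finset (Fin n)) A
    (fun i _ j _ hij => hdisj i j hij)
  simpa using this

lemma not_both (G : Type*) [Group G] :
    ¬ (IsParadoxical G ∧ HasLeftInvariantMean G) := by
  rintro ⟨⟨p, q, hp, hq, A, B, s, t, hA, hB, hAB, hsU, hsD, htU, htD⟩,
    μ, hb, hu, hadd, hinv⟩
  have hAsum : μ (⋃ i, A i) = 1 := by
    rw [mean_iUnion_fin hadd A hA]
    have : ∑ i, μ (A i) = ∑ i, μ (s i • A i) := by
      congr 1; ext i; rw [hinv]
    rw [this, ← mean_iUnion_fin hadd _ hsD, hsU, hu]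
  have hBsum : μ (⋃ j, B j) = 1 := by
    rw [mean_iUnion_fin hadd B hB]
    have : ∑ j, μ (B j) = ∑ j, μ (t j • B j) := by
      congr 1; ext j; rw [hinv]
    rw [this, ← mean_iUnion_fin hadd _ htD, htU, hu]
  have hdisj : Disjoint (⋃ i, A i) (⋃ j, B j) := by
    apply Set.disjoint_iUnion_left.2
    intro i
    exact Set.disjoint_iUnion_right.2 fun j => hAB i j
  have h2 : μ ((⋃ i, A i) ∪ ⋃ j, B j) = 2 := by
    rw [hadd _ _ hdisj, hAsum, hBsum]; norm_num
  have := (hb ((⋃ i, A i) ∪ ⋃ j, B j)).2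
  linarith

/-- From a doubling set, get an injection `G × Fin 2 → G` moving points by elements of `S`. -/
lemma exists_injection_of_doubling [DecidableEq G] (S : Finset G)
    (hS : ∀ F : Finset G, 2 * F.card ≤ (S * F).card) :
    ∃ f : G × Fin 2 → G, Function.Injective f ∧
      ∀ x : G × Fin 2, ∃ s ∈ S, f x = s * x.1 := by
  have := (Finset.all_card_le_biUnion_card_iff_exists_injective
    (fun x : G × Fin 2 => S.image (· * x.1))).1 ?_
  · obtain ⟨f, hinj, hmem⟩ := this
    refine ⟨f, hinj, fun x => ?_⟩
    obtain ⟨s, hs, hfx⟩ := Finset.mem_image.1 (hmem x)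
    exact ⟨s, hs, hfx.symm⟩
  · intro T
    set F := T.image Prod.fst with hF
    have hT : T.card ≤ 2 * F.card := by
      calc T.card ≤ (F ×ˢ (Finset.univ : Finset (Fin 2))).card := by
            apply Finset.card_le_card
            intro x hx
            exact Finset.mem_product.2 ⟨Finset.mem_image_of_mem _ hx, Finset.mem_univ _⟩
        _ = 2 * F.card := by simp [Finset.card_product, mul_comm]
    have hsub : S * F ⊆ T.biUnion (fun x => S.image (· * x.1)) := by
      intro a ha
      obtain ⟨s, hs, g, hg, rfl⟩ := Finset.mem_mul.1 ha
      obtain ⟨x, hx, rfl⟩ := Finset.mem_image.1 hg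
      exact Finset.mem_biUnion.2 ⟨x, hx, Finset.mem_image_of_mem _ hs⟩
    calc T.card ≤ 2 * F.card := hT
      _ ≤ (S * F).card := hS F
      _ ≤ _ := Finset.card_le_card hsub

/-- From such an injection, build a paradoxical decomposition. -/
lemma isParadoxical_of_injection (S : Finset G) (hne : S.Nonempty)
    (f : G × Fin 2 → G) (hinj : Function.Injective f)
    (hmov : ∀ x : G × Fin 2, ∃ s ∈ S, f x = s * x.1) :
    IsParadoxical G := by
  classical
  set p := S.card with hp
  have hp0 : 0 < p := Finset.card_pos.2 hne
  -- enumeration of S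
  let e : Fin p ≃ {x // x ∈ S} := S.equivFin.symm
  -- index of the element moving (g, i)
  have hc : ∀ (g : G) (i : Fin 2), ∃ k : Fin p, f (g, i) = (e k : G) * g := by
    intro g i
    obtain ⟨s, hs, hfs⟩ := hmov (g, i)
    exact ⟨e.symm ⟨s, hs⟩, by simpa using hfs⟩
  choose c hcspec using hc
  refine ⟨p, p, hp0, hp0,
    (fun k => (fun g => f (g, 0)) '' {g | c g 0 = k}),
    (fun k => (fun g => f (g, 1)) '' {g | c g 1 = k}),
    (fun k => ((e k : G))⁻¹), (fun k => ((e k : G))⁻¹), ?_, ?_, ?_, ?_, ?_, ?_, ?_⟩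
  · -- A's pairwise disjoint
    intro i i' hne'
    rw [Set.disjoint_left]
    rintro a ⟨g, hg, rfl⟩ ⟨g', hg', hgg'⟩
    have : g' = g := by
      have := hinj hgg'; simpa using this
    subst this
    exact hne' (hg.symm.trans hg') |>.elim
  · intro j j' hne'
    rw [Set.disjoint_left]
    rintro a ⟨g, hg, rfl⟩ ⟨g', hg', hgg'⟩
    have : g' = g := by
      have := hinj hgg'; simpa using this
    subst this
    exact hne' (hg.symm.trans hg') |>.elim
  · intro i j
    rw [Set.disjoint_left]
    rintro a ⟨g, _, rfl⟩ ⟨g', _, hgg'⟩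
    have := hinj hgg'
    simp at this
  · -- union of translates of A's covers
    ext x
    simp only [Set.mem_iUnion, Set.mem_univ, iff_true]
    refine ⟨c x 0, ?_⟩
    refine ⟨f (x, 0), ⟨x, rfl, rfl⟩, ?_⟩
    rw [hcspec x 0]
    simp [smul_eq_mul, inv_mul_cancel_left]
  · -- translates of A's disjoint
    intro i i' hne'
    rw [Set.disjoint_left]
    rintro a ⟨y, ⟨g, hg, rfl⟩, rfl⟩ ⟨y', ⟨g', hg', rfl⟩, hy'⟩
    simp only [] at hy'
    rw [hcspec g 0, hcspec g' 0, hg, hg'] at hy'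
    have : g' = g := by
      simpa [smul_eq_mul, inv_mul_cancel_left] using hy'
    subst this
    exact hne' ((hg.symm.trans hg')) |>.elim
  · ext x
    simp only [Set.mem_iUnion, Set.mem_univ, iff_true]
    refine ⟨c x 1, f (x, 1), ⟨x, rfl, rfl⟩, ?_⟩
    rw [hcspec x 1]
    simp [smul_eq_mul, inv_mul_cancel_left]
  · intro j j' hne'
    rw [Set.disjoint_left]
    rintro a ⟨y, ⟨g, hg, rfl⟩, rfl⟩ ⟨y', ⟨g', hg', rfl⟩, hy'⟩
    simp only [] at hy'
    rw [hcspec g 1, hcspec g' 1, hg, hg'] at hy'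
    have : g' = g := by
      simpa [smul_eq_mul, inv_mul_cancel_left] using hy'
    subst this
    exact hne' ((hg.symm.trans hg')) |>.elim


variable [DecidableEq G]

/-- If no finite set doubles, then Følner sets exist. -/
lemma folner_of_not_doubling
    (H : ∀ S : Finset G, ∃ F : Finset G, F.Nonempty ∧ (S * F).card < 2 * F.card)
    (K : Finset G) {ε : ℝ} (hε : 0 < ε) :
    ∃ F : Finset G, F.Nonempty ∧ ∀ g ∈ K, (((g • F) \ F).card : ℝ) ≤ ε * F.card := by
  set K' : Finset G := insert 1 K with hK'
  obtain ⟨n, hn⟩ := pow_unbounded_of_one_lt (2 : ℝ) (by linarith : (1:ℝ) < 1 + ε)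
  obtain ⟨F, hFne, hFcard⟩ := H (K' ^ n)
  set Fk : ℕ → Finset G := fun k => K' ^ k * F with hFk
  have hFk0 : Fk 0 = F := by simp [hFk]
  have hFksucc : ∀ k, Fk (k + 1) = K' * Fk k := by
    intro k; simp only [hFk]; rw [pow_succ', mul_assoc]
  have h1K : (1 : G) ∈ K' := Finset.mem_insert_self 1 K
  have hone : ∀ k, (1 : G) ∈ K' ^ k := fun k => Finset.one_mem_pow h1K
  have hFkne : ∀ k, (Fk k).Nonempty := by
    intro k
    obtain ⟨x, hx⟩ := hFne
    exact ⟨1 * x, Finset.mul_mem_mul (hone k) hx⟩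
  have hsub : ∀ k, Fk k ⊆ K' * Fk k := by
    intro k x hx
    have := Finset.mul_mem_mul h1K hx
    simpa using this
  by_contra hcon
  push_neg at hcon
  have hgrow : ∀ k, (1 + ε) * (Fk k).card < ((Fk (k+1)).card : ℝ) := by
    intro k
    obtain ⟨g, hgK, hbad⟩ := hcon (Fk k) (hFkne k)
    have h2 : (g • Fk k) \ Fk k ⊆ (K' * Fk k) \ Fk k := by
      apply Finset.sdiff_subset_sdiff _ le_rfl
      intro x hx
      obtain ⟨y, hy, rfl⟩ := Finset.mem_smul_finset.1 hx
      exact Finset.mul_mem_mul (Finset.mem_insert_of_mem hgK) hy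
    have h3 : ((K' * Fk k) \ Fk k).card + (Fk k).card = (K' * Fk k).card :=
      Finset.card_sdiff_add_card_eq_card (hsub k)
    have h4 : ((g • Fk k) \ Fk k).card ≤ ((K' * Fk k) \ Fk k).card :=
      Finset.card_le_card h2
    rw [hFksucc k]
    have : (((g • Fk k) \ Fk k).card : ℝ) + (Fk k).card ≤ ((K' * Fk k).card : ℝ) := by
      push_cast [← h3]
      exact_mod_cast add_le_add_left (Nat.cast_le.2 h4) _
    nlinarith [hbad]
  have hpow : ∀ k, (1 + ε) ^ k * ((Fk 0).card : ℝ) ≤ (Fk k).card := by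
    intro k
    induction k with
    | zero => simp
    | succ k ih =>
      have := hgrow k
      have hεk : (0:ℝ) < (1+ε)^k := pow_pos (by linarith) k
      calc (1+ε)^(k+1) * ((Fk 0).card : ℝ) = (1+ε) * ((1+ε)^k * (Fk 0).card) := by ring
        _ ≤ (1+ε) * (Fk k).card := by nlinarith
        _ ≤ (Fk (k+1)).card := le_of_lt (hgrow k)
  have hc0 : (0:ℝ) < ((Fk 0).card : ℝ) := by
    exact_mod_cast Finset.card_pos.2 (hFkne 0)
  have hfin : ((Fk n).card : ℝ) < 2 * (Fk 0).card := by
    rw [hFk0]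
    exact_mod_cast hFcard
  have := hpow n
  nlinarith

lemma mean_of_folner
    (Fol : ∀ (K : Finset G) (n : ℕ), ∃ F : Finset G, F.Nonempty ∧
      ∀ g ∈ K, (((g • F) \ F).card : ℝ) ≤ (1/(n+1)) * F.card) :
    HasLeftInvariantMean G := by
  classical
  choose Fn hFne hFprop using fun d : Finset G × ℕ => Fol d.1 d.2
  have hFpos : ∀ d, (0:ℝ) < ((Fn d).card : ℝ) := fun d => by
    exact_mod_cast Finset.card_pos.2 (hFne d)
  set dens : Set G → (Finset G × ℕ) → ℝ :=
    fun A d => (((Fn d).filter (· ∈ A)).card : ℝ) / ((Fn d).card : ℝ) with hdens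
  have hdens01 : ∀ A d, dens A d ∈ Set.Icc (0:ℝ) 1 := by
    intro A d
    constructor
    · positivity
    · rw [div_le_one (hFpos d)]
      exact_mod_cast Finset.card_le_card (Finset.filter_subset _ _)
  -- the ultrafilter
  set u : Ultrafilter (Finset G × ℕ) := Ultrafilter.of atTop with hu
  have hule : (u : Filter (Finset G × ℕ)) ≤ atTop := Ultrafilter.of_le _
  -- limits exist
  have hlim : ∀ A : Set G, ∃ a ∈ Set.Icc (0:ℝ) 1, Tendsto (dens A) u (nhds a) := by
    intro A
    have hcpt : IsCompact (Set.Icc (0:ℝ) 1) := isCompact_Icc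
    have := hcpt.ultrafilter_le_nhds (Ultrafilter.map (dens A) u) ?_
    · obtain ⟨a, ha, hle⟩ := this
      exact ⟨a, ha, by rwa [Ultrafilter.coe_map] at hle⟩
    · rw [Ultrafilter.coe_map, Filter.le_principal_iff, Filter.mem_map]
      have : (dens A) ⁻¹' (Set.Icc (0:ℝ) 1) = Set.univ := by
        ext d; simpa using hdens01 A d
      rw [this]
      exact Filter.univ_mem
  choose μ hμIcc hμtend using hlim
  refine ⟨μ, fun A => ⟨(hμIcc A).1, (hμIcc A).2⟩, ?_, ?_, ?_⟩
  · -- μ univ = 1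
    have h1 : Tendsto (dens Set.univ) u (nhds 1) := by
      have : dens Set.univ = fun _ => (1:ℝ) := by
        funext d
        simp only [hdens, Set.mem_univ, Finset.filter_true_of_mem (fun _ _ => trivial)]
        exact div_self (ne_of_gt (hFpos d))
      rw [this]
      exact tendsto_const_nhds
    exact tendsto_nhds_unique (hμtend Set.univ) h1
  · -- additivity
    intro A B hAB
    have hpt : dens (A ∪ B) = fun d => dens A d + dens B d := by
      funext d
      simp only [hdens]
      rw [← add_div]
      congr 1
      have hd : Disjoint ((Fn d).filter (· ∈ A)) ((Fn d).filter (· ∈ B)) := by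
        apply Finset.disjoint_filter_filter'
        rw [Set.disjoint_iff_forall_ne] at hAB
        rw [disjoint_iff_inf_le]
        rintro x ⟨hx1, hx2⟩
        exact absurd rfl (hAB hx1 hx2)
      have heq : ((Fn d).filter (· ∈ A ∪ B)) = (Fn d).filter (· ∈ A) ∪ (Fn d).filter (· ∈ B) := by
        ext x; simp [Set.mem_union]; tauto
      rw [Finset.filter_congr_decidable, heq, Finset.card_union_of_disjoint hd]
      push_cast; ring
    have h2 : Tendsto (dens (A ∪ B)) u (nhds (μ A + μ B)) := by
      rw [hpt]
      exact (hμtend A).add (hμtend B)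
    exact tendsto_nhds_unique (hμtend (A ∪ B)) h2
  · -- invariance
    intro g A
    have key : ∀ n : ℕ, ∀ d : Finset G × ℕ, (({g} : Finset G), n) ≤ d →
        |dens (g • A) d - dens A d| ≤ 2 / (n + 1) := by
      intro n d hd
      have hgK : g ∈ d.1 := hd.1 (Finset.mem_singleton_self g)
      have hn : n ≤ d.2 := hd.2
      set F := Fn d with hF
      have hcnt : ((F.filter (· ∈ g • A)).card : ℝ)
          = (((g⁻¹ • F).filter (· ∈ A)).card : ℝ) := by
        have heq : (g⁻¹ • F).filter (· ∈ A) = g⁻¹ • (F.filter (· ∈ g • A)) := by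
          ext y
          simp only [Finset.mem_filter, Finset.mem_smul_finset]
          constructor
          · rintro ⟨⟨x, hx, rfl⟩, hy⟩
            exact ⟨x, ⟨hx, by rwa [Set.mem_smul_set_iff_inv_smul_mem]⟩, rfl⟩
          · rintro ⟨x, ⟨hx, hxA⟩, rfl⟩
            exact ⟨⟨x, hx, rfl⟩, by rwa [Set.mem_smul_set_iff_inv_smul_mem] at hxA⟩
        rw [heq, Finset.card_smul_finset]
      -- compare counts over g⁻¹ • F and F
      have hsub1 : (g⁻¹ • F).filter (· ∈ A) ⊆ (F.filter (· ∈ A)) ∪ ((g⁻¹ • F) \ F) := by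
        intro y hy
        obtain ⟨hyF, hyA⟩ := Finset.mem_filter.1 hy
        by_cases h : y ∈ F
        · exact Finset.mem_union_left _ (Finset.mem_filter.2 ⟨h, hyA⟩)
        · exact Finset.mem_union_right _ (Finset.mem_sdiff.2 ⟨hyF, h⟩)
      have hsub2 : F.filter (· ∈ A) ⊆ ((g⁻¹ • F).filter (· ∈ A)) ∪ (F \ (g⁻¹ • F)) := by
        intro y hy
        obtain ⟨hyF, hyA⟩ := Finset.mem_filter.1 hy
        by_cases h : y ∈ g⁻¹ • F
        · exact Finset.mem_union_left _ (Finset.mem_filter.2 ⟨h, hyA⟩)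
        · exact Finset.mem_union_right _ (Finset.mem_sdiff.2 ⟨hyF, h⟩)
      have hc1 : ((g⁻¹ • F) \ F).card = ((g • F) \ F).card := by
        have h1 : g • ((g⁻¹ • F) \ F) = F \ (g • F) := by
          rw [Finset.smul_finset_sdiff, smul_inv_smul]
        have h2 : ((g⁻¹ • F) \ F).card = (F \ (g • F)).card := by
          rw [← h1, Finset.card_smul_finset]
        rw [h2]
        exact Finset.card_sdiff_comm (by rw [Finset.card_smul_finset])
      have hc2 : (F \ (g⁻¹ • F)).card = ((g • F) \ F).card := by
        have h1 : g • (F \ (g⁻¹ • F)) = (g • F) \ F := by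
          rw [Finset.smul_finset_sdiff, smul_inv_smul]
        rw [← h1, Finset.card_smul_finset]
      have hb1 : (((g⁻¹ • F).filter (· ∈ A)).card : ℝ)
          ≤ ((F.filter (· ∈ A)).card : ℝ) + (((g • F) \ F).card : ℝ) := by
        have := Finset.card_le_card hsub1
        have h3 := Finset.card_union_le (F.filter (· ∈ A)) ((g⁻¹ • F) \ F)
        have : ((g⁻¹ • F).filter (· ∈ A)).card
            ≤ (F.filter (· ∈ A)).card + ((g⁻¹ • F) \ F).card := le_trans this h3
        rw [hc1] at this
        exact_mod_cast this
      have hb2 : ((F.filter (· ∈ A)).card : ℝ)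
          ≤ (((g⁻¹ • F).filter (· ∈ A)).card : ℝ) + (((g • F) \ F).card : ℝ) := by
        have := Finset.card_le_card hsub2
        have h3 := Finset.card_union_le ((g⁻¹ • F).filter (· ∈ A)) (F \ (g⁻¹ • F))
        have : (F.filter (· ∈ A)).card
            ≤ ((g⁻¹ • F).filter (· ∈ A)).card + (F \ (g⁻¹ • F)).card := le_trans this h3
        rw [hc2] at this
        exact_mod_cast this
      -- Følner bound
      have hFol : (((g • F) \ F).card : ℝ) ≤ (1/(d.2+1)) * F.card := hFprop d g hgK
      have hmono : (1/((d.2:ℝ)+1)) ≤ 1/((n:ℝ)+1) := by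
        apply one_div_le_one_div_of_le
        · positivity
        · exact_mod_cast Nat.add_le_add_right hn 1
      have hFol2 : (((g • F) \ F).card : ℝ) ≤ (1/((n:ℝ)+1)) * F.card := by
        calc (((g • F) \ F).card : ℝ) ≤ (1/((d.2:ℝ)+1)) * F.card := by exact_mod_cast hFol
          _ ≤ (1/((n:ℝ)+1)) * F.card := by
              apply mul_le_mul_of_nonneg_right hmono (le_of_lt (hFpos d))
      -- conclude
      have hFpos' := hFpos d
      rw [hdens]
      simp only
      rw [hcnt, div_sub_div_same, abs_div, abs_of_pos hFpos', div_le_iff₀ hFpos']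
      have habs : |(((g⁻¹ • F).filter (· ∈ A)).card : ℝ) - ((F.filter (· ∈ A)).card : ℝ)|
          ≤ 2 * (((g • F) \ F).card : ℝ) := by
        rw [abs_sub_le_iff]
        constructor <;> linarith
      calc |(((g⁻¹ • F).filter (· ∈ A)).card : ℝ) - ((F.filter (· ∈ A)).card : ℝ)|
          ≤ 2 * (((g • F) \ F).card : ℝ) := habs
        _ ≤ 2 * ((1/((n:ℝ)+1)) * F.card) := by linarith
        _ = 2 / ((n:ℝ)+1) * F.card := by ring
    -- the difference tends to 0
    have hzero : Tendsto (fun d => dens (g • A) d - dens A d) u (nhds 0) := by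
      rw [Metric.tendsto_nhds]
      intro ε hε
      obtain ⟨n, hnε⟩ := exists_nat_gt (2/ε)
      have hn2 : 2 / ((n:ℝ)+1) < ε := by
        rw [div_lt_iff₀ (by positivity)]
        have h2ε : 2/ε < (n:ℝ) + 1 := lt_trans hnε (by linarith)
        calc (2:ℝ) = (2/ε) * ε := by field_simp
          _ < ((n:ℝ)+1) * ε := by nlinarith
          _ = ε * ((n:ℝ)+1) := by ring
      have hmem : {d : Finset G × ℕ | (({g} : Finset G), n) ≤ d} ∈ (u : Filter (Finset G × ℕ)) :=
        hule (Filter.mem_atTop _)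
      apply Filter.mem_of_superset hmem
      intro d hd
      simp only [Set.mem_setOf_eq, dist_zero_right, Real.norm_eq_abs] at *
      exact lt_of_le_of_lt (key n d hd) hn2
    have h2 : Tendsto (dens (g • A)) u (nhds (μ A)) := by
      have : dens (g • A) = fun d => (dens (g • A) d - dens A d) + dens A d := by
        funext d; ring
      rw [this]
      have := hzero.add (hμtend A)
      simpa using this
    exact tendsto_nhds_unique (hμtend (g • A)) h2

lemma mean_of_not_paradoxical [DecidableEq G] (h : ¬ IsParadoxical G) :
    HasLeftInvariantMean G := by
  classical
  have H : ∀ S : Finset G, ∃ F : Finset G, F.Nonempty ∧ (S * F).card < 2 * F.card := by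
    intro S
    by_contra hcon
    push_neg at hcon
    have hdbl : ∀ F : Finset G, 2 * F.card ≤ (S * F).card := by
      intro F
      rcases F.eq_empty_or_nonempty with rfl | hF
      · simp
      · exact hcon F hF
    have hSne : S.Nonempty := by
      rcases S.eq_empty_or_nonempty with rfl | hS
      · exfalso
        have := hdbl {1}
        simp at this
      · exact hS
    obtain ⟨f, hinj, hmov⟩ := exists_injection_of_doubling S hdbl
    exact h (isParadoxical_of_injection S hSne f hinj hmov)
  apply mean_of_folner
  intro K n
  exact folner_of_not_doubling H K (by positivity : (0:ℝ) < 1/((n:ℝ)+1))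

end Aux

end PaperStmt

namespace PaperStmt

/-- **Tarski's alternative.** For every discrete group `G`, exactly one of the following holds:
(1) `G` admits a paradoxical decomposition; (2) `G` is amenable. -/
theorem tarski_alternative (G : Type*) [Group G] :
    Xor' (IsParadoxical G) (HasLeftInvariantMean G) := by
  classical
  by_cases h : IsParadoxical G
  · exact Or.inl ⟨h, fun hm => not_both G ⟨h, hm⟩⟩
  · exact Or.inr ⟨mean_of_not_paradoxical h, h⟩

end PaperStmt
end
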